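/- Let λ_m > 0, μ_m ≠ 0, and let ρ, δ, p_c, θ, ω, S be real numbers. Define Δ = (4·p_c·θ·ω·μ_m·S - 4·λ_m·δ - 2·λ_m·ρ)² - 16·(μ_m·p_c·θ·ω·S)², assume Δ ≥ 0, and set A = (4·λ_m·δ + 2·λ_m·ρ - 4·p_c·θ·ω·μ_m·S - √Δ)/(8·μ_m²). Then λ_m·(ρ + δ) - p_c·θ·ω·μ_m·S - 2·A·μ_m² = (2·λ_m·ρ + √Δ)/4. Consequently, if 2·λ_m·ρ + √Δ > 0, then for any real numbers θ, p_i, q_i, the unique real number D satisfying ρ·D = θ·p_i·q_i + D·((p_c·θ·ω·μ_m·S + 2·A·μ_m²)/λ_m - δ) is D = 4·λ_m·θ·p_i·q_i/(2·λ_m·ρ + √Δ). -/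

import Mathlib

/-- In the decentralized model, with `A` the minus-sign root, one has
`λ_m(ρ+δ) - p_c θ ω μ_m S - 2Aμ_m² = (2λ_m ρ + √Δ)/4`; consequently the
coefficient equation for the retailer's value-function slope `D` has the
unique solution `D = 4λ_m θ p_i q_i/(2λ_m ρ + √Δ)`. -/
theorem stmt_13 (lm mum rho del pc th om S Del A : ℝ) (hlm : 0 < lm) (hmum : mum ≠ 0)
    (hDel : Del = (4 * pc * th * om * mum * S - 4 * lm * del - 2 * lm * rho) ^ 2
      - 16 * (mum * pc * th * om * S) ^ 2)
    (hDelpos : 0 ≤ Del)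
    (hA : A = (4 * lm * del + 2 * lm * rho - 4 * pc * th * om * mum * S - Real.sqrt Del) /
      (8 * mum ^ 2)) :
    lm * (rho + del) - pc * th * om * mum * S - 2 * A * mum ^ 2 =
      (2 * lm * rho + Real.sqrt Del) / 4 ∧
    (0 < 2 * lm * rho + Real.sqrt Del →
      ∀ pi qi : ℝ, ∀ D : ℝ,
        (rho * D = th * pi * qi +
          D * ((pc * th * om * mum * S + 2 * A * mum ^ 2) / lm - del)) ↔
        D = 4 * lm * th * pi * qi / (2 * lm * rho + Real.sqrt Del)) := by
  have hm2 : (mum : ℝ) ^ 2 ≠ 0 := pow_ne_zero 2 hmum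
  have hlm' : lm ≠ 0 := ne_of_gt hlm
  have key : lm * (rho + del) - pc * th * om * mum * S - 2 * A * mum ^ 2 =
      (2 * lm * rho + Real.sqrt Del) / 4 := by
    subst hA
    field_simp
    ring
  refine ⟨key, fun hpos pi qi D => ?_⟩
  have hne : 2 * lm * rho + Real.sqrt Del ≠ 0 := ne_of_gt hpos
  constructor
  · intro h
    have h2 : D * (lm * (rho + del) - pc * th * om * mum * S - 2 * A * mum ^ 2) =
        lm * (th * pi * qi) := by
      field_simp at h
      nlinarith [h]
    rw [key] at h2
    field_simp at h2 ⊢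
    linarith [h2]
  · intro h
    subst h
    have h2 : (4 * lm * th * pi * qi / (2 * lm * rho + Real.sqrt Del)) *
        (lm * (rho + del) - pc * th * om * mum * S - 2 * A * mum ^ 2) =
        lm * (th * pi * qi) := by
      rw [key, div_mul_div_comm, div_eq_iff (mul_ne_zero hne four_ne_zero)]; ring
    generalize 4 * lm * th * pi * qi / (2 * lm * rho + Real.sqrt Del) = E at h2 ⊢
    field_simp at h2 ⊢
    nlinarith [h2]
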